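/- Fix m > 0 and for each C ∈ ℝ define P_C(γ) = ∫₁^γ p_C(y)·y dy for γ ∈ [1, m+1], and set L(m) = (3/10)(m+1)² − (1/20)(m+1)⁴ − 1/4 − ((m+1)⁴ − 1)/(20m) · [1 − 1/(m+1)²] and N(m) = (1/10)(m+1)⁴ − (2/5)(m+1)² − 1/2 + ((m+1)⁴ − 1)/(10m) · [1 + 1/(m+1)²]. Then L(m) < 0 and N(m) > 0, P_C(m+1) = L(m)·C + N(m), and P_C(γ) ≥ min{0, L(m)·C + N(m)} for all γ ∈ [1, m+1]. -/

import Mathlib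

open Set Filter

/-- The coefficient `A(C)` from the paper (depending on `m`). -/
noncomputable def Acoef (m C : ℝ) : ℝ :=
  3 * C / m * (1 - 1 / (m + 1) ^ 2) - 6 / m * (1 + 1 / (m + 1) ^ 2)

/-- The coefficient `B(C)` from the paper (depending on `m`). -/
noncomputable def Bcoef (m C : ℝ) : ℝ :=
  -2 * C * (1 + 1 / m - 1 / (m * (m + 1) ^ 2)) + 4 * (1 + 1 / m + 1 / (m * (m + 1) ^ 2))

/-- The polynomial `p_C(γ) = A(C)·γ³/3 + B(C)·γ²/2 + C`. -/
noncomputable def pC (m C γ : ℝ) : ℝ :=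
  Acoef m C * γ ^ 3 / 3 + Bcoef m C * γ ^ 2 / 2 + C

/-- `L(m)` from Lemma 3.2.1. -/
noncomputable def Lm (m : ℝ) : ℝ :=
  3 / 10 * (m + 1) ^ 2 - 1 / 20 * (m + 1) ^ 4 - 1 / 4 -
    ((m + 1) ^ 4 - 1) / (20 * m) * (1 - 1 / (m + 1) ^ 2)

/-- `N(m)` from Lemma 3.2.1. -/
noncomputable def Nm (m : ℝ) : ℝ :=
  1 / 10 * (m + 1) ^ 4 - 2 / 5 * (m + 1) ^ 2 - 1 / 2 +
    ((m + 1) ^ 4 - 1) / (10 * m) * (1 + 1 / (m + 1) ^ 2)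

/-- `P_C(γ) = ∫₁^γ p_C(y)·y dy`. -/
noncomputable def PC (m C γ : ℝ) : ℝ := ∫ y in (1 : ℝ)..γ, pC m C y * y

section aux

variable (m C : ℝ)

lemma pC_one (hm : 0 < m) : pC m C 1 = 2 := by
  have h1 : m ≠ 0 := ne_of_gt hm
  have h2 : (m + 1) ^ 2 ≠ 0 := by positivity
  unfold pC Acoef Bcoef
  field_simp
  ring

lemma pC_top (hm : 0 < m) : pC m C (m + 1) = -2 := by
  have h1 : m ≠ 0 := ne_of_gt hm
  have h2 : (m + 1) ^ 2 ≠ 0 := by positivity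
  unfold pC Acoef Bcoef
  field_simp
  ring

lemma hasDerivAt_pC (y : ℝ) :
    HasDerivAt (pC m C) (Acoef m C * y ^ 2 + Bcoef m C * y) y := by
  have h := ((((hasDerivAt_pow 3 y).const_mul (Acoef m C)).div_const 3).add
      (((hasDerivAt_pow 2 y).const_mul (Bcoef m C)).div_const 2)).add_const C
  have he : pC m C = fun z : ℝ => Acoef m C * z ^ 3 / 3 + Bcoef m C * z ^ 2 / 2 + C := by
    funext z; unfold pC; ring
  rw [he]
  refine h.congr_deriv ?_
  push_cast; ring

noncomputable def Fant (γ : ℝ) : ℝ :=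
  Acoef m C * γ ^ 5 / 15 + Bcoef m C * γ ^ 4 / 8 + C * γ ^ 2 / 2

lemma hasDerivAt_Fant (y : ℝ) :
    HasDerivAt (Fant m C) (pC m C y * y) y := by
  have h := ((((hasDerivAt_pow 5 y).const_mul (Acoef m C)).div_const 15).add
      (((hasDerivAt_pow 4 y).const_mul (Bcoef m C)).div_const 8)).add
      (((hasDerivAt_pow 2 y).const_mul C).div_const 2)
  have he : Fant m C = fun z : ℝ =>
      Acoef m C * z ^ 5 / 15 + Bcoef m C * z ^ 4 / 8 + C * z ^ 2 / 2 := by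
    funext z; unfold Fant; ring
  rw [he]
  refine h.congr_deriv ?_
  unfold pC; push_cast; ring

lemma continuous_integrand : Continuous (fun y => pC m C y * y) := by
  unfold pC; continuity

lemma PC_eq (γ : ℝ) : PC m C γ = Fant m C γ - Fant m C 1 := by
  unfold PC
  rw [intervalIntegral.integral_eq_sub_of_hasDerivAt
    (fun y _ => hasDerivAt_Fant m C y)
    ((continuous_integrand m C).intervalIntegrable _ _)]

lemma hasDerivAt_PC (y : ℝ) : HasDerivAt (PC m C) (pC m C y * y) y := by
  have : PC m C = fun γ => Fant m C γ - Fant m C 1 := funext (PC_eq m C)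
  rw [this]
  exact (hasDerivAt_Fant m C y).sub_const _

lemma Lm_eq (hm : 0 < m) :
    Lm m = -((m ^ 2 + 2 * m) * (m ^ 5 + 5 * m ^ 4 + 5 * m ^ 3)) / (20 * m * (m + 1) ^ 2) := by
  have h1 : m ≠ 0 := ne_of_gt hm
  have h2 : (m + 1) ^ 2 ≠ 0 := by positivity
  unfold Lm; field_simp; ring

lemma Nm_eq (hm : 0 < m) :
    Nm m = ((m + 1) ^ 2 + 1) * (m ^ 5 + 5 * m ^ 4 + 5 * m ^ 3) / (10 * m * (m + 1) ^ 2) := by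
  have h1 : m ≠ 0 := ne_of_gt hm
  have h2 : (m + 1) ^ 2 ≠ 0 := by positivity
  unfold Nm; field_simp; ring

lemma PC_top (hm : 0 < m) : PC m C (m + 1) = Lm m * C + Nm m := by
  have h1 : m ≠ 0 := ne_of_gt hm
  have h2 : (m + 1) ^ 2 ≠ 0 := by positivity
  rw [PC_eq]
  unfold Fant Acoef Bcoef Lm Nm
  field_simp
  ring

/-- once `pC` is negative, it stays negative on `[1, m+1]` -/
lemma pC_sign (hm : 0 < m) {x y : ℝ} (hx : 1 ≤ x) (hxy : x ≤ y) (hy : y ≤ m + 1)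
    (hneg : pC m C x < 0) : pC m C y < 0 := by
  by_contra hpos
  push_neg at hpos
  set A := Acoef m C with hA
  set B := Bcoef m C with hB
  -- strict inequalities
  have h1x : 1 < x := by
    rcases eq_or_lt_of_le hx with h | h
    · rw [← h, pC_one m C hm] at hneg; norm_num at hneg
    · exact h
  have hxy' : x < y := by
    rcases eq_or_lt_of_le hxy with h | h
    · rw [h] at hneg; linarith
    · exact h
  have hyt : y < m + 1 := by
    rcases eq_or_lt_of_le hy with h | h
    · rw [h, pC_top m C hm] at hpos; norm_num at hpos
    · exact h
  -- three applications of MVT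
  obtain ⟨u, hu, hu'⟩ := exists_hasDerivAt_eq_slope (pC m C) (fun z => A * z ^ 2 + B * z) h1x
    (fun z _ => (hasDerivAt_pC m C z).continuousAt.continuousWithinAt)
    (fun z _ => hasDerivAt_pC m C z)
  obtain ⟨v, hv, hv'⟩ := exists_hasDerivAt_eq_slope (pC m C) (fun z => A * z ^ 2 + B * z) hxy'
    (fun z _ => (hasDerivAt_pC m C z).continuousAt.continuousWithinAt)
    (fun z _ => hasDerivAt_pC m C z)
  obtain ⟨w, hw, hw'⟩ := exists_hasDerivAt_eq_slope (pC m C) (fun z => A * z ^ 2 + B * z) hyt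
    (fun z _ => (hasDerivAt_pC m C z).continuousAt.continuousWithinAt)
    (fun z _ => hasDerivAt_pC m C z)

  rw [pC_one m C hm] at hu'
  rw [pC_top m C hm] at hw'
  have hu0 : 0 < u := lt_trans one_pos hu.1
  have hv0 : 0 < v := by have := hv.1; linarith
  have hw0 : 0 < w := by have := hw.1; linarith
  have hslope1 : A * u ^ 2 + B * u < 0 := by
    rw [hu']
    apply div_neg_of_neg_of_pos <;> linarith
  have hslope2 : 0 < A * v ^ 2 + B * v := by
    rw [hv']
    apply div_pos <;> linarith
  have hslope3 : A * w ^ 2 + B * w < 0 := by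
    rw [hw']
    apply div_neg_of_neg_of_pos <;> linarith
  have hAu : A * u + B < 0 := by nlinarith
  have hAv : 0 < A * v + B := by nlinarith
  have hAw : A * w + B < 0 := by nlinarith
  have huv : u < v := lt_trans hu.2 hv.1
  have hvw : v < w := lt_trans hv.2 hw.1
  have hApos : 0 < A := by nlinarith
  nlinarith

end aux


/-- Lemma 3.2.1 (Pingali): `L(m) < 0`, `N(m) > 0`, `P_C(m+1) = L(m)·C + N(m)`, and
`P_C(γ) ≥ min {0, L(m)·C + N(m)}` on `[1, m+1]`. -/
theorem stmt9 (m : ℝ) (hm : 0 < m) (C : ℝ) :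
    Lm m < 0 ∧ 0 < Nm m ∧ PC m C (m + 1) = Lm m * C + Nm m ∧
    ∀ γ ∈ Set.Icc (1 : ℝ) (m + 1), min 0 (Lm m * C + Nm m) ≤ PC m C γ := by
  have hL : Lm m < 0 := by
    rw [Lm_eq m hm]
    apply div_neg_of_neg_of_pos
    · have : 0 < (m ^ 2 + 2 * m) * (m ^ 5 + 5 * m ^ 4 + 5 * m ^ 3) := by positivity
      linarith
    · positivity
  have hN : 0 < Nm m := by
    rw [Nm_eq m hm]; positivity
  refine ⟨hL, hN, PC_top m C hm, ?_⟩
  -- the sign-change point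
  set S : Set ℝ := {γ | γ ∈ Set.Icc (1:ℝ) (m + 1) ∧ 0 ≤ pC m C γ} with hS
  have hSclosed : IsClosed S := by
    have : S = Set.Icc (1:ℝ) (m+1) ∩ (fun γ => pC m C γ) ⁻¹' (Set.Ici 0) := rfl
    rw [this]
    exact isClosed_Icc.inter (IsClosed.preimage (by unfold pC; continuity) isClosed_Ici)
  have h1S : (1:ℝ) ∈ S := by
    constructor
    · exact ⟨le_refl _, by linarith⟩
    · rw [pC_one m C hm]; norm_num
  have hbdd : BddAbove S := ⟨m + 1, fun x hx => hx.1.2⟩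
  set c := sSup S with hc
  have hcS : c ∈ S := hSclosed.csSup_mem ⟨1, h1S⟩ hbdd
  have hc1 : 1 ≤ c := le_csSup hbdd h1S
  have hct : c ≤ m + 1 := hcS.1.2
  have hcpos : 0 ≤ pC m C c := hcS.2
  -- pC nonneg on [1, c]
  have hnonneg : ∀ x ∈ Set.Icc (1:ℝ) c, 0 ≤ pC m C x := by
    intro x hx
    by_contra h
    push_neg at h
    exact absurd (pC_sign m C hm hx.1 hx.2 hct h) (not_lt.2 hcpos)
  -- pC nonpos on (c, m+1]
  have hnonpos : ∀ x, c < x → x ≤ m + 1 → pC m C x < 0 := by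
    intro x hcx hxt
    by_contra h
    push_neg at h
    have : x ∈ S := ⟨⟨le_trans hc1 (le_of_lt hcx), hxt⟩, h⟩
    exact absurd (le_csSup hbdd this) (not_le.2 hcx)
  -- monotone on [1,c]
  have hmono : MonotoneOn (PC m C) (Set.Icc 1 c) := by
    apply monotoneOn_of_deriv_nonneg (convex_Icc _ _)
    · exact fun x _ => (hasDerivAt_PC m C x).continuousAt.continuousWithinAt
    · intro x hx
      exact (hasDerivAt_PC m C x).differentiableAt.differentiableWithinAt
    · intro x hx
      rw [interior_Icc] at hx
      rw [(hasDerivAt_PC m C x).deriv]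
      exact mul_nonneg (hnonneg x ⟨le_of_lt hx.1, le_of_lt hx.2⟩)
        (by linarith [hx.1])
  -- antitone on [c, m+1]
  have hanti : AntitoneOn (PC m C) (Set.Icc c (m + 1)) := by
    apply antitoneOn_of_deriv_nonpos (convex_Icc _ _)
    · exact fun x _ => (hasDerivAt_PC m C x).continuousAt.continuousWithinAt
    · intro x hx
      exact (hasDerivAt_PC m C x).differentiableAt.differentiableWithinAt
    · intro x hx
      rw [interior_Icc] at hx
      rw [(hasDerivAt_PC m C x).deriv]
      have hx0 : 0 < x := by linarith [lt_of_le_of_lt hc1 hx.1]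
      exact mul_nonpos_of_nonpos_of_nonneg
        (le_of_lt (hnonpos x hx.1 (le_of_lt hx.2))) (le_of_lt hx0)
  have hPC1 : PC m C 1 = 0 := by unfold PC; exact intervalIntegral.integral_same
  intro γ hγ
  rcases le_total γ c with h | h
  · have := hmono ⟨le_refl 1, hc1⟩ ⟨hγ.1, h⟩ hγ.1
    rw [hPC1] at this
    exact le_trans (min_le_left _ _) this
  · have := hanti ⟨h, hγ.2⟩ ⟨hct, le_refl _⟩ hγ.2
    rw [PC_top m C hm] at this
    exact le_trans (min_le_right _ _) this
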